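/- arXiv:2108.04871 — 2 statements merged into one kernel-verified Lean document; each statement's English description precedes it below -/
import Mathlib

section
/- Let q be a prime power, v ≥ 3, 1 ≤ t < q, and let K be an (n,s)-arc in PG(v−1,q) that is t-quasi-divisible with divisor q. Suppose there exist c points P_1, …, P_c (not necessarily distinct) such that for every hyperplane H, the residue of n + t − K(H) modulo q (taken in {0,…,q−1}) is at least #{i ∈ {1,…,c} : P_i lies in H}. Then K is c-extendable, i.e. there exists an (n+c, s)-arc K' with K'(P) ≥ K(P) for every point P. In particular, if there exists a point P such that K(H) ≢ n + t (mod q) for every hyperplane H containing P, then K is 1-extendable. -/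
open Module

/-- The set of subspaces of the vector space `F^v` of (algebraic) dimension `k`;
for `k = 1` these are the points of `PG(v-1, q)`, for `k = 2` the lines, and
for `k = v - 1` the hyperplanes. -/
abbrev PSub (F : Type*) [Field F] (v k : ℕ) :=
  {S : Submodule F (Fin v → F) // Module.finrank F S = k}

/-- The multiplicity `K(S)` of a subspace `S` with respect to the arc `K`. -/
noncomputable def pmult {F : Type*} [Field F] {v : ℕ}
    (K : PSub F v 1 → ℕ) (S : Submodule F (Fin v → F)) : ℕ :=
  ∑ᶠ (P : PSub F v 1) (_ : P.1 ≤ S), K P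

/-- The cardinality `#K` of the arc `K`. -/
noncomputable def pcard {F : Type*} [Field F] {v : ℕ} (K : PSub F v 1 → ℕ) : ℕ :=
  ∑ᶠ P : PSub F v 1, K P

/-- The residue of `n + t - K(H)` modulo `q`, taken in `{0, ..., q-1}`;
this is the multiplicity of the point of the dual geometry corresponding to
the hyperplane `H` with respect to the dual arc `K̃`. -/
noncomputable def dualMult {F : Type*} [Field F] {v : ℕ} (q n t : ℕ)
    (K : PSub F v 1 → ℕ) (H : PSub F v (v - 1)) : ℕ :=
  ((((n : ℤ) + (t : ℤ) - (pmult K H.1 : ℤ)) % (q : ℤ)).toNat)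


open scoped Classical in
lemma pmult_eq' {F : Type*} [Field F] [Fintype F] {v : ℕ} [Fintype (PSub F v 1)]
    (K : PSub F v 1 → ℕ) (S : Submodule F (Fin v → F)) :
    pmult K S = ∑ P : PSub F v 1, if P.1 ≤ S then K P else 0 := by
  unfold pmult
  rw [finsum_eq_sum_of_fintype]
  congr 1
  ext P
  exact finsum_eq_if

lemma pcard_eq' {F : Type*} [Field F] [Fintype F] {v : ℕ} [Fintype (PSub F v 1)]
    (K : PSub F v 1 → ℕ) : pcard K = ∑ P : PSub F v 1, K P :=
  finsum_eq_sum_of_fintype K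

lemma count_lemma' {α : Type*} [Fintype α] [DecidableEq α] {c : ℕ} (f : Fin c → α)
    (p : α → Prop) [DecidablePred p] :
    ∑ P : α, (if p P then (Finset.univ.filter (fun i => f i = P)).card else 0)
      = (Finset.univ.filter (fun i => p (f i))).card := by
  classical
  have h1 : ∀ P : α, (if p P then (Finset.univ.filter (fun i => f i = P)).card else 0)
      = ((Finset.univ.filter (fun i => p (f i))).filter (fun i => f i = P)).card := by
    intro P
    rw [Finset.filter_filter]
    by_cases hP : p P
    · rw [if_pos hP]
      congr 1
      apply Finset.filter_congr
      intro i _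
      constructor
      · intro h; subst h; exact ⟨hP, rfl⟩
      · intro h; exact h.2
    · rw [if_neg hP]
      symm
      rw [Finset.card_eq_zero, Finset.filter_eq_empty_iff]
      rintro i _ ⟨hpi, hfi⟩
      exact hP (hfi ▸ hpi)
  simp only [h1]
  exact (Finset.card_eq_sum_card_fiberwise (fun i _ => Finset.mem_univ (f i))).symm

lemma dual_eq' {q n t j m : ℕ} (hjt : j ≤ t) (htq : t < q) (hm : m ≡ n + j [MOD q]) :
    (((n : ℤ) + t - m) % q).toNat = t - j := by
  have hd : (q : ℤ) ∣ ((n : ℤ) + j) - m := by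
    have := (Nat.modEq_iff_dvd (n := q) (a := m) (b := n + j)).mp hm
    push_cast at this ⊢
    exact this
  have h1 : ((n : ℤ) + t - m) % q = ((t : ℤ) - j) % q := by
    have : ((n : ℤ) + t - m) ≡ ((t : ℤ) - j) [ZMOD q] := by
      rw [Int.modEq_comm, Int.modEq_iff_dvd]
      convert hd using 1
      ring
    exact this
  rw [h1, Int.emod_eq_of_lt (by omega) (by omega)]
  omega

lemma s_bound' {q n s t j m : ℕ} (hjt : j ≤ t) (htq : t < q) (hms : m ≤ s)
    (hst : s ≡ n + t [MOD q]) (hm : m ≡ n + j [MOD q]) : m + (t - j) ≤ s := by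
  have hd1 : (q : ℤ) ∣ ((n : ℤ) + t) - s := by
    have := (Nat.modEq_iff_dvd (n := q) (a := s) (b := n + t)).mp hst
    push_cast at this ⊢; exact this
  have hd2 : (q : ℤ) ∣ ((n : ℤ) + j) - m := by
    have := (Nat.modEq_iff_dvd (n := q) (a := m) (b := n + j)).mp hm
    push_cast at this ⊢; exact this
  by_contra h
  have hd3 : (q : ℤ) ∣ ((t : ℤ) - j) + m - s := by
    have := dvd_sub hd1 hd2
    rw [show ((t : ℤ) - j) + m - s = (((n : ℤ) + t) - s) - (((n : ℤ) + j) - m) by ring]; exact this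
  have := Int.le_of_dvd (by omega) hd3
  omega

/-- Extendability of `t`-quasi-divisible `(n,s)`-arcs: if there are `c` points
`P_1, ..., P_c` such that for every hyperplane `H` the dual multiplicity
`(n + t - K(H)) mod q` is at least the number of indices `i` with `P_i ∈ H`,
then `K` is `c`-extendable.  In particular, if some point lies only on
hyperplanes `H` with `K(H) ≢ n + t (mod q)`, then `K` is extendable. -/
theorem stmt11 {F : Type*} [Field F] [Fintype F] (q : ℕ) (hq : Fintype.card F = q)
    {v : ℕ} (hv : 3 ≤ v) (n s t : ℕ) (ht1 : 1 ≤ t) (ht2 : t < q)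
    (K : PSub F v 1 → ℕ) (hn : pcard K = n)
    (hs : ∀ H : PSub F v (v - 1), pmult K H.1 ≤ s)
    (hs' : ∃ H : PSub F v (v - 1), pmult K H.1 = s)
    (hst : s ≡ n + t [MOD q])
    (hqd : ∀ H : PSub F v (v - 1), ∃ j : ℕ, j ≤ t ∧ pmult K H.1 ≡ n + j [MOD q]) :
    (∀ c : ℕ, ∀ Ps : Fin c → PSub F v 1,
      (∀ H : PSub F v (v - 1),
        Nat.card {i : Fin c // (Ps i).1 ≤ H.1} ≤ dualMult q n t K H) →
      ∃ K' : PSub F v 1 → ℕ,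
        pcard K' = n + c ∧
        (∀ H : PSub F v (v - 1), pmult K' H.1 ≤ s) ∧
        (∃ H : PSub F v (v - 1), pmult K' H.1 = s) ∧
        (∀ P : PSub F v 1, K P ≤ K' P)) ∧
    ((∃ P : PSub F v 1, ∀ H : PSub F v (v - 1),
        P.1 ≤ H.1 → ¬ (pmult K H.1 ≡ n + t [MOD q])) →
      ∃ K' : PSub F v 1 → ℕ,
        pcard K' = n + 1 ∧
        (∀ H : PSub F v (v - 1), pmult K' H.1 ≤ s) ∧
        (∃ H : PSub F v (v - 1), pmult K' H.1 = s) ∧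
        (∀ P : PSub F v 1, K P ≤ K' P)) := by
  classical
  haveI : Fintype (PSub F v 1) := Fintype.ofFinite _
  have key : ∀ c : ℕ, ∀ Ps : Fin c → PSub F v 1,
      (∀ H : PSub F v (v - 1),
        Nat.card {i : Fin c // (Ps i).1 ≤ H.1} ≤ dualMult q n t K H) →
      ∃ K' : PSub F v 1 → ℕ,
        pcard K' = n + c ∧
        (∀ H : PSub F v (v - 1), pmult K' H.1 ≤ s) ∧
        (∃ H : PSub F v (v - 1), pmult K' H.1 = s) ∧
        (∀ P : PSub F v 1, K P ≤ K' P) := by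
    intro c Ps hPs
    set K' : PSub F v 1 → ℕ :=
      fun P => K P + (Finset.univ.filter (fun i => Ps i = P)).card with hK'def
    have hpm : ∀ S : Submodule F (Fin v → F),
        pmult K' S = pmult K S + (Finset.univ.filter (fun i => (Ps i).1 ≤ S)).card := by
      intro S
      rw [pmult_eq' K' S, pmult_eq' K S, ← count_lemma' Ps (fun P => P.1 ≤ S),
        ← Finset.sum_add_distrib]
      congr 1
      ext P
      by_cases h : P.1 ≤ S <;> simp [h, hK'def]
    have hcount : ∀ H : PSub F v (v - 1),
        (Finset.univ.filter (fun i => (Ps i).1 ≤ H.1)).card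
          = Nat.card {i : Fin c // (Ps i).1 ≤ H.1} := by
      intro H
      rw [Nat.card_eq_fintype_card, Fintype.card_subtype]
    have hdval : ∀ H : PSub F v (v - 1), ∃ j : ℕ, j ≤ t ∧
        pmult K H.1 ≡ n + j [MOD q] ∧ dualMult q n t K H = t - j := by
      intro H
      obtain ⟨j, hj, hmod⟩ := hqd H
      exact ⟨j, hj, hmod, dual_eq' hj ht2 hmod⟩
    refine ⟨K', ?_, ?_, ?_, fun P => Nat.le_add_right _ _⟩
    · rw [pcard_eq', Finset.sum_add_distrib, ← pcard_eq' K, hn]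
      congr 1
      have := count_lemma' Ps (fun _ => True)
      simpa using this
    · intro H
      obtain ⟨j, hj, hmod, hdm⟩ := hdval H
      have h1 := hPs H
      rw [hdm] at h1
      have h2 := s_bound' hj ht2 (hs H) hst hmod
      rw [hpm, hcount]
      omega
    · obtain ⟨H₀, hH₀⟩ := hs'
      refine ⟨H₀, ?_⟩
      obtain ⟨j, hj, hmod, hdm⟩ := hdval H₀
      have hjt : j = t := by
        rw [hH₀] at hmod
        have hd : (q : ℤ) ∣ ((n : ℤ) + j) - (n + t) := by
          have := (Nat.modEq_iff_dvd (n := q) (a := n + t) (b := n + j)).mp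
            (hst.symm.trans hmod)
          push_cast at this ⊢; exact this
        by_contra hne
        have hlt : j < t := lt_of_le_of_ne hj hne
        have hd' : (q : ℤ) ∣ (t : ℤ) - j := by
          have := dvd_neg.mpr hd
          rw [show (t : ℤ) - j = -(((n : ℤ) + j) - (n + t)) by ring]
          exact this
        have := Int.le_of_dvd (by omega) hd'
        omega
      have h1 := hPs H₀
      rw [hdm, hjt] at h1
      rw [hpm, hcount, hH₀]
      omega
  refine ⟨key, ?_⟩
  rintro ⟨P, hP⟩
  apply key 1 (fun _ => P)
  intro H
  show Nat.card {i : Fin 1 // P.1 ≤ H.1} ≤ dualMult q n t K H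
  by_cases h : P.1 ≤ H.1
  · have hcard : Nat.card {i : Fin 1 // P.1 ≤ H.1} ≤ 1 := by
      have : Nat.card {i : Fin 1 // P.1 ≤ H.1}
          ≤ Nat.card (Fin 1) := Nat.card_le_card_of_injective _ Subtype.val_injective
      simpa using this
    obtain ⟨j, hj, hmod⟩ := hqd H
    have hjt : j < t := by
      rcases Nat.lt_or_ge j t with h' | h'
      · exact h'
      · exfalso; exact hP H h (by rwa [le_antisymm hj h'] at hmod)
    have := dual_eq' hj ht2 hmod
    unfold dualMult
    rw [this]
    omega
  · have : IsEmpty {i : Fin 1 // P.1 ≤ H.1} := ⟨fun i => h i.2⟩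
    rw [Nat.card_of_isEmpty]
    exact Nat.zero_le _
end

section
/- Let q be a prime power, v ≥ 3, 1 ≤ t < q, and let K be an (n,s)-arc in PG(v−1,q) that is t-quasi-divisible with divisor q. Then for every (v−2)-dimensional subspace S of PG(v−1,q), the sum over the q+1 hyperplanes H containing S of the residue of n + t − K(H) modulo q (taken in {0,…,q−1}) is congruent to t modulo q. -/
open Module

/- ---------- auxiliary material ---------- -/

instance psubmoduleFinite {F : Type*} [Field F] [Fintype F] {v : ℕ} :
    Finite (Submodule F (Fin v → F)) :=
  Finite.of_injective (fun p => (p : Set (Fin v → F))) SetLike.coe_injective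

noncomputable instance psubFintype {F : Type*} [Field F] [Fintype F] {v k : ℕ} :
    Fintype (PSub F v k) :=
  Fintype.ofFinite _

private lemma aux_finrank_comap_mkQ {F M : Type*} [Field F] [AddCommGroup M] [Module F M]
    [FiniteDimensional F M] (S : Submodule F M) (W : Submodule F (M ⧸ S)) :
    finrank F (W.comap S.mkQ) = finrank F W + finrank F S := by
  have h := LinearMap.finrank_range_add_finrank_ker (S.mkQ ∘ₗ (W.comap S.mkQ).subtype)
  rw [LinearMap.range_comp, Submodule.range_subtype,
    Submodule.map_comap_eq_of_surjective S.mkQ_surjective, LinearMap.ker_comp,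
    Submodule.ker_mkQ] at h
  have hle : S ≤ W.comap S.mkQ := by
    have h2 := LinearMap.ker_le_comap (p := W) S.mkQ
    rwa [Submodule.ker_mkQ] at h2
  rw [(Submodule.comapSubtypeEquivOfLe hle).finrank_eq] at h
  exact h.symm

private lemma aux_span_eq {F M : Type*} [Field F] [AddCommGroup M] [Module F M]
    [FiniteDimensional F M] {W : Submodule F M} (hW : finrank F W = 1)
    {x : M} (hx : x ∈ W) (hx0 : x ≠ 0) : Submodule.span F {x} = W :=
  Submodule.eq_of_le_of_finrank_le ((Submodule.span_singleton_le_iff_mem x W).mpr hx)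
    (by simp [hW, finrank_span_singleton hx0])

private lemma aux_card_hyperplanes {F : Type*} [Field F] [Fintype F] {v : ℕ} (hv : 3 ≤ v)
    (S : PSub F v (v - 2)) :
    Nat.card {H : PSub F v (v - 1) // S.1 ≤ H.1} = Fintype.card F + 1 := by
  classical
  have hM : finrank F (Fin v → F) = v := Module.finrank_fin_fun F
  set q := Fintype.card F with hq
  have hq2 : 2 ≤ q := Fintype.one_lt_card
  have hQ : finrank F ((Fin v → F) ⧸ S.1) = 2 := by
    have h := Submodule.finrank_quotient_add_finrank S.1
    rw [S.2, hM] at h; omega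
  letI : Fintype ((Fin v → F) ⧸ S.1) := Fintype.ofFinite _
  have hcardQ : Fintype.card ((Fin v → F) ⧸ S.1) = q ^ 2 := by
    rw [card_eq_pow_finrank (K := F), hQ]
  have hkey : ∀ x : (Fin v → F) ⧸ S.1, x ≠ 0 →
      finrank F ((Submodule.span F {x}).comap S.1.mkQ) = v - 1 := by
    intro x hx
    rw [aux_finrank_comap_mkQ, finrank_span_singleton hx, S.2]; omega
  have hle : ∀ x : (Fin v → F) ⧸ S.1, S.1 ≤ (Submodule.span F {x}).comap S.1.mkQ := by
    intro x
    have h2 := LinearMap.ker_le_comap (p := Submodule.span F {x}) S.1.mkQ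
    rwa [Submodule.ker_mkQ] at h2
  set f : {x : (Fin v → F) ⧸ S.1 // x ≠ 0} → {H : PSub F v (v - 1) // S.1 ≤ H.1} :=
    fun x => ⟨⟨(Submodule.span F {x.1}).comap S.1.mkQ, hkey _ x.2⟩, hle _⟩ with hf
  have hfiber : ∀ H : {H : PSub F v (v - 1) // S.1 ≤ H.1},
      Nat.card {x // f x = H} = q - 1 := by
    intro H
    set W : Submodule F ((Fin v → F) ⧸ S.1) := H.1.1.map S.1.mkQ with hW
    have hcomap : W.comap S.1.mkQ = H.1.1 := by
      rw [hW, Submodule.comap_map_mkQ, sup_eq_right.mpr H.2]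
    have hWrk : finrank F W = 1 := by
      have h := aux_finrank_comap_mkQ S.1 W
      rw [hcomap, H.1.2, S.2] at h; omega
    have hiff : ∀ x : (Fin v → F) ⧸ S.1, x ≠ 0 →
        ((Submodule.span F {x}).comap S.1.mkQ = H.1.1 ↔ x ∈ W) := by
      intro x hx
      constructor
      · intro h
        have hsp : Submodule.span F {x} = W := by
          rw [← Submodule.map_comap_eq_of_surjective S.1.mkQ_surjective
            (Submodule.span F {x}), h, hW]
        rw [← hsp]
        exact Submodule.mem_span_singleton_self x
      · intro h
        rw [aux_span_eq hWrk h hx, hcomap]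
    have e : {x // f x = H} ≃ {y : W // y ≠ 0} :=
      { toFun := fun z => ⟨⟨z.1.1, (hiff z.1.1 z.1.2).mp
          (congrArg (fun a => a.1.1) z.2)⟩, by
            intro h0
            exact z.1.2 (by simpa using congrArg Subtype.val h0)⟩
        invFun := fun y => ⟨⟨y.1.1, by
            intro h0
            exact y.2 (by exact Subtype.ext h0)⟩,
          Subtype.ext (Subtype.ext ((hiff y.1.1 (by
            intro h0
            exact y.2 (Subtype.ext h0)) ).mpr y.1.2))⟩
        left_inv := fun z => Subtype.ext (Subtype.ext rfl)
        right_inv := fun y => Subtype.ext (Subtype.ext rfl) }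
    rw [Nat.card_congr e]
    letI : Fintype W := Fintype.ofFinite _
    have hcW : Fintype.card W = q := by
      rw [card_eq_pow_finrank (K := F), hWrk, pow_one]
    rw [Nat.card_eq_fintype_card, Fintype.card_subtype_compl, hcW, Fintype.card_subtype_eq]
  have htot : Nat.card {x : (Fin v → F) ⧸ S.1 // x ≠ 0} = q ^ 2 - 1 := by
    rw [Nat.card_eq_fintype_card, Fintype.card_subtype_compl, hcardQ, Fintype.card_subtype_eq]
  letI : Fintype {H : PSub F v (v - 1) // S.1 ≤ H.1} := Fintype.ofFinite _
  have hsig : Nat.card {x : (Fin v → F) ⧸ S.1 // x ≠ 0}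
      = Nat.card {H : PSub F v (v - 1) // S.1 ≤ H.1} * (q - 1) := by
    rw [Nat.card_congr (Equiv.sigmaFiberEquiv f).symm]
    letI : ∀ H : {H : PSub F v (v - 1) // S.1 ≤ H.1}, Fintype {x // f x = H} :=
      fun H => Fintype.ofFinite _
    rw [Nat.card_eq_fintype_card, Fintype.card_sigma, Nat.card_eq_fintype_card]
    calc ∑ H : {H : PSub F v (v - 1) // S.1 ≤ H.1}, Fintype.card {x // f x = H}
        = ∑ _H : {H : PSub F v (v - 1) // S.1 ≤ H.1}, (q - 1) := by
          refine Finset.sum_congr rfl fun H _ => ?_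
          rw [← hfiber H, Nat.card_eq_fintype_card]
      _ = Fintype.card {H : PSub F v (v - 1) // S.1 ≤ H.1} * (q - 1) := by
          rw [Finset.sum_const, Finset.card_univ, smul_eq_mul]
  have hmul : Nat.card {H : PSub F v (v - 1) // S.1 ≤ H.1} * (q - 1) = (q + 1) * (q - 1) := by
    rw [← hsig, htot]
    have h1 : 1 ≤ q := by omega
    have h2 : 1 ≤ q ^ 2 := Nat.one_le_pow _ _ (by omega)
    zify [h1, h2]
    ring
  exact Nat.eq_of_mul_eq_mul_right (by omega) hmul
/-- For a `t`-quasi-divisible `(n,s)`-arc `K` in `PG(v-1,q)`, the dual arc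
`K̃` is a `(t mod q)`-arc: for every `(v-2)`-dimensional subspace `S`, the sum
over the hyperplanes `H ⊇ S` of the residue of `n + t - K(H)` modulo `q` is
congruent to `t` modulo `q`. -/
theorem stmt12 {F : Type*} [Field F] [Fintype F] (q : ℕ) (hq : Fintype.card F = q)
    {v : ℕ} (hv : 3 ≤ v) (n s t : ℕ) (ht1 : 1 ≤ t) (ht2 : t < q)
    (K : PSub F v 1 → ℕ) (hn : pcard K = n)
    (hs : ∀ H : PSub F v (v - 1), pmult K H.1 ≤ s)
    (hs' : ∃ H : PSub F v (v - 1), pmult K H.1 = s)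
    (hst : s ≡ n + t [MOD q])
    (hqd : ∀ H : PSub F v (v - 1), ∃ j : ℕ, j ≤ t ∧ pmult K H.1 ≡ n + j [MOD q]) :
    ∀ S : PSub F v (v - 2),
      (∑ᶠ (H : PSub F v (v - 1)) (_ : S.1 ≤ H.1), dualMult q n t K H) ≡ t [MOD q] := by
  intro S
  classical
  have hq1 : 1 ≤ q := by omega
  set HS : Finset (PSub F v (v - 1)) := Finset.univ.filter (fun H => S.1 ≤ H.1) with hHS
  have hfin1 : (∑ᶠ (H : PSub F v (v - 1)) (_ : S.1 ≤ H.1), dualMult q n t K H)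
      = ∑ H ∈ HS, dualMult q n t K H :=
    finsum_cond_eq_sum_of_cond_iff _ (fun {H} _ => by simp [hHS])
  rw [hfin1, ← ZMod.natCast_eq_natCast_iff]
  push_cast
  -- number of hyperplanes through S
  have hcardHS : HS.card = q + 1 := by
    have h := aux_card_hyperplanes hv S
    rw [hq] at h
    rwa [Nat.card_eq_fintype_card, Fintype.card_subtype] at h
  -- pmult as a Finset sum
  have hpm : ∀ T : Submodule F (Fin v → F), pmult K T =
      ∑ P ∈ Finset.univ.filter (fun P : PSub F v 1 => P.1 ≤ T), K P := by
    intro T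
    exact finsum_cond_eq_sum_of_cond_iff _ (fun {P} _ => by simp)
  -- double counting
  have hdouble : ∑ H ∈ HS, pmult K H.1 = q * pmult K S.1 + n := by
    have hswap : ∑ H ∈ HS, pmult K H.1
        = ∑ P : PSub F v 1, K P * (HS.filter (fun H => P.1 ≤ H.1)).card := by
      simp_rw [hpm]
      calc ∑ H ∈ HS, ∑ P ∈ Finset.univ.filter (fun P : PSub F v 1 => P.1 ≤ H.1), K P
          = ∑ H ∈ HS, ∑ P : PSub F v 1, if P.1 ≤ H.1 then K P else 0 := by
            simp_rw [Finset.sum_filter]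
        _ = ∑ P : PSub F v 1, ∑ H ∈ HS, if P.1 ≤ H.1 then K P else 0 := Finset.sum_comm
        _ = ∑ P : PSub F v 1, ∑ _H ∈ HS.filter (fun H => P.1 ≤ H.1), K P := by
            simp_rw [Finset.sum_filter]
        _ = ∑ P : PSub F v 1, K P * (HS.filter (fun H => P.1 ≤ H.1)).card := by
            simp [Finset.sum_const, mul_comm]
    have hin : ∀ P : PSub F v 1, P.1 ≤ S.1 →
        (HS.filter (fun H => P.1 ≤ H.1)).card = q + 1 := by
      intro P hP
      rw [Finset.filter_eq_self.mpr, hcardHS]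
      intro H hH
      rw [hHS] at hH
      exact le_trans hP (Finset.mem_filter.mp hH).2
    have hout : ∀ P : PSub F v 1, ¬ P.1 ≤ S.1 →
        (HS.filter (fun H => P.1 ≤ H.1)).card = 1 := by
      intro P hP
      have hrk : finrank F (S.1 ⊔ P.1 : Submodule F (Fin v → F)) = v - 1 := by
        have h := Submodule.finrank_sup_add_finrank_inf_eq S.1 P.1
        have hinf : finrank F (S.1 ⊓ P.1 : Submodule F (Fin v → F)) = 0 := by
          by_contra h0
          have h1 : 1 ≤ finrank F (S.1 ⊓ P.1 : Submodule F (Fin v → F)) :=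
            Nat.one_le_iff_ne_zero.mpr h0
          have heq : S.1 ⊓ P.1 = P.1 :=
            Submodule.eq_of_le_of_finrank_le inf_le_right (by rw [P.2]; exact h1)
          exact hP (le_trans (le_of_eq heq.symm) inf_le_left)
        rw [S.2, P.2, hinf] at h
        omega
      rw [Finset.card_eq_one]
      refine ⟨⟨S.1 ⊔ P.1, hrk⟩, ?_⟩
      ext H
      simp only [Finset.mem_filter, Finset.mem_singleton, hHS, Finset.mem_univ, true_and]
      constructor
      · rintro ⟨hSH, hPH⟩
        have heq : S.1 ⊔ P.1 = H.1 :=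
          Submodule.eq_of_le_of_finrank_le (sup_le hSH hPH) (by rw [hrk, H.2])
        exact Subtype.ext heq.symm
      · rintro rfl
        exact ⟨le_sup_left, le_sup_right⟩
    rw [hswap, ← Finset.sum_filter_add_sum_filter_not Finset.univ
      (fun P : PSub F v 1 => P.1 ≤ S.1)]
    have h1 : ∑ P ∈ Finset.univ.filter (fun P : PSub F v 1 => P.1 ≤ S.1),
        K P * (HS.filter (fun H => P.1 ≤ H.1)).card = (q + 1) * pmult K S.1 := by
      rw [hpm, Finset.mul_sum]
      refine Finset.sum_congr rfl fun P hP => ?_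
      rw [hin P (Finset.mem_filter.mp hP).2, mul_comm]
    have h2 : ∑ P ∈ Finset.univ.filter (fun P : PSub F v 1 => ¬ P.1 ≤ S.1),
        K P * (HS.filter (fun H => P.1 ≤ H.1)).card
        = ∑ P ∈ Finset.univ.filter (fun P : PSub F v 1 => ¬ P.1 ≤ S.1), K P := by
      refine Finset.sum_congr rfl fun P hP => ?_
      rw [hout P (Finset.mem_filter.mp hP).2, mul_one]
    have h3 : pmult K S.1 + ∑ P ∈ Finset.univ.filter (fun P : PSub F v 1 => ¬ P.1 ≤ S.1),
        K P = n := by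
      rw [hpm, Finset.sum_filter_add_sum_filter_not, ← hn]
      unfold pcard
      rw [finsum_eq_sum_of_fintype]
    rw [h1, h2, add_mul, one_mul, add_assoc, h3]
  -- conclusion in ZMod q
  have hdm : ∀ H ∈ HS, ((dualMult q n t K H : ℕ) : ZMod q)
      = ((n : ZMod q) + t) - ((pmult K H.1 : ℕ) : ZMod q) := by
    intro H _
    have hnn : (0 : ℤ) ≤ ((n : ℤ) + t - (pmult K H.1 : ℤ)) % (q : ℤ) :=
      Int.emod_nonneg _ (by exact_mod_cast Nat.one_le_iff_ne_zero.mp hq1)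
    have hcast : ∀ a : ℤ, 0 ≤ a → ((a.toNat : ℕ) : ZMod q) = (a : ZMod q) := fun a ha => by
      rw [← Int.cast_natCast, Int.toNat_of_nonneg ha]
    unfold dualMult
    rw [hcast _ hnn, ZMod.intCast_mod]
    push_cast
    ring
  calc ∑ H ∈ HS, ((dualMult q n t K H : ℕ) : ZMod q)
      = ∑ H ∈ HS, (((n : ZMod q) + t) - ((pmult K H.1 : ℕ) : ZMod q)) :=
        Finset.sum_congr rfl hdm
    _ = HS.card • ((n : ZMod q) + t) - ∑ H ∈ HS, ((pmult K H.1 : ℕ) : ZMod q) := by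
        rw [Finset.sum_sub_distrib, Finset.sum_const]
    _ = (t : ZMod q) := by
        rw [hcardHS, ← Nat.cast_sum, hdouble]
        push_cast [ZMod.natCast_self, nsmul_eq_mul]
        ring
end
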